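/- Define ω(q,p) = sqrt((Re q - Re p)² + (|Im q| + |Im p|)²) and σ(q,p) = |q-p| if p and q lie in a common complex line L_I, and σ(q,p) = ω(q,p) otherwise. Then σ is a metric on H: it is nonnegative, vanishes exactly on the diagonal, is symmetric, and satisfies the triangle inequality. -/

import Mathlib

local notation "ℍ" => Quaternion ℝ

/-- Convolution (star) product of coefficient sequences. -/
noncomputable def conv (a b : ℕ → ℍ) : ℕ → ℍ := fun n => ∑ k ∈ Finset.range (n+1), a k * b (n-k)

/-- Coefficient sequence of the polynomial `q - p` (right coefficients). -/
noncomputable def binomSeq (p : ℍ) : ℕ → ℍ := fun k => if k = 0 then -p else if k = 1 then 1 else 0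

/-- n-fold star (convolution) power of a coefficient sequence. -/
noncomputable def convPow (a : ℕ → ℍ) : ℕ → ℕ → ℍ
  | 0 => fun k => if k = 0 then 1 else 0
  | n+1 => conv (convPow a n) a

/-- The regular power `(q-p)^{*n}` evaluated at `q`. -/
noncomputable def starPow (p : ℍ) (n : ℕ) (q : ℍ) : ℍ :=
  ∑ k ∈ Finset.range (n+1), q^k * convPow (binomSeq p) n k

noncomputable def omegaDist (q p : ℍ) : ℝ :=
  Real.sqrt ((q.re - p.re)^2 + (‖q.im‖ + ‖p.im‖)^2)

/-- `q` and `p` lie in a common complex line `L_I = ℝ + Iℝ`. -/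
def SameLine (q p : ℍ) : Prop :=
  ∃ I : ℍ, I^2 = -1 ∧ (∃ a b : ℝ, q = (a : ℍ) + b • I) ∧ (∃ a b : ℝ, p = (a : ℍ) + b • I)

open Classical in
noncomputable def sigmaDist (q p : ℍ) : ℝ :=
  if SameLine q p then ‖q - p‖ else omegaDist q p

/- ### auxiliary lemmas -/

lemma aux_abs_mk (a b : ℝ) : ‖(⟨a, b⟩ : ℂ)‖ = Real.sqrt (a^2 + b^2) := by
  rw [Complex.norm_def, Complex.normSq_apply]
  norm_num [sq]

lemma aux_norm_quat (x : ℍ) : ‖x‖ = Real.sqrt (x.re^2 + ‖x.im‖^2) := by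
  have h1 : ‖x‖^2 = x.re^2 + ‖x.im‖^2 := by
    have a1 := Quaternion.normSq_eq_norm_mul_self x
    have a2 := Quaternion.normSq_eq_norm_mul_self x.im
    rw [Quaternion.normSq_def'] at a1 a2
    simp only [Quaternion.re_im, Quaternion.imI_im, Quaternion.imJ_im, Quaternion.imK_im] at a2
    nlinarith
  rw [← h1, Real.sqrt_sq (norm_nonneg _)]

lemma aux_norm_sub (q p : ℍ) : ‖q - p‖ = Real.sqrt ((q.re - p.re)^2 + ‖q.im - p.im‖^2) := by
  rw [aux_norm_quat]; simp

lemma aux_norm_le_omega (q p : ℍ) : ‖q - p‖ ≤ omegaDist q p := by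
  rw [aux_norm_sub, omegaDist]
  apply Real.sqrt_le_sqrt
  have := norm_sub_le q.im p.im
  nlinarith [norm_nonneg (q.im - p.im), norm_nonneg q.im, norm_nonneg p.im]

lemma aux_omega_nonneg (q p : ℍ) : 0 ≤ omegaDist q p := Real.sqrt_nonneg _

lemma aux_omega_symm (q p : ℍ) : omegaDist q p = omegaDist p q := by
  unfold omegaDist; ring_nf

/-- the "unfolding" distance between (re, ‖im‖) points -/
noncomputable def auxD (q p : ℍ) : ℝ := Real.sqrt ((q.re - p.re)^2 + (‖q.im‖ - ‖p.im‖)^2)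

lemma aux_D_le_norm (q p : ℍ) : auxD q p ≤ ‖q - p‖ := by
  rw [auxD, aux_norm_sub]
  apply Real.sqrt_le_sqrt
  have := abs_norm_sub_norm_le q.im p.im
  nlinarith [abs_nonneg (‖q.im‖ - ‖p.im‖), norm_nonneg (q.im - p.im), sq_abs (‖q.im‖ - ‖p.im‖)]

lemma aux_D_le_omega (q p : ℍ) : auxD q p ≤ omegaDist q p := by
  rw [auxD, omegaDist]
  apply Real.sqrt_le_sqrt
  nlinarith [norm_nonneg q.im, norm_nonneg p.im]

lemma aux_omega_tri (q o p : ℍ) : omegaDist q p ≤ auxD q o + omegaDist o p := by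
  have key : (⟨q.re - p.re, ‖q.im‖ + ‖p.im‖⟩ : ℂ) =
      (⟨q.re - o.re, ‖q.im‖ - ‖o.im‖⟩ : ℂ) + (⟨o.re - p.re, ‖o.im‖ + ‖p.im‖⟩ : ℂ) := by
    apply Complex.ext <;>
      simp only [Complex.add_re, Complex.add_im] <;> ring
  have h := norm_add_le (⟨q.re - o.re, ‖q.im‖ - ‖o.im‖⟩ : ℂ) (⟨o.re - p.re, ‖o.im‖ + ‖p.im‖⟩ : ℂ)
  rw [← key] at h
  simpa only [aux_abs_mk, omegaDist, auxD] using h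

lemma aux_D_le_sigma (q p : ℍ) : auxD q p ≤ sigmaDist q p := by
  rw [sigmaDist]
  split
  · exact aux_D_le_norm q p
  · exact aux_D_le_omega q p

lemma aux_norm_le_sigma (q p : ℍ) : ‖q - p‖ ≤ sigmaDist q p := by
  rw [sigmaDist]
  split
  · exact le_refl _
  · exact aux_norm_le_omega q p

lemma aux_sigma_le_omega (q p : ℍ) : sigmaDist q p ≤ omegaDist q p := by
  rw [sigmaDist]; split
  · exact aux_norm_le_omega q p
  · exact le_refl _

lemma aux_D_symm (q p : ℍ) : auxD q p = auxD p q := by unfold auxD; ring_nf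

/-- a square root of -1 is purely imaginary of norm 1 -/
lemma aux_unit_re {I : ℍ} (h : I^2 = -1) : I.re = 0 := by
  have h1 : (I^2).re = (-1 : ℍ).re := by rw [h]
  have h2 : (I^2).imI = (-1 : ℍ).imI := by rw [h]
  have h3 : (I^2).imJ = (-1 : ℍ).imJ := by rw [h]
  have h4 : (I^2).imK = (-1 : ℍ).imK := by rw [h]
  simp only [sq, Quaternion.re_mul, Quaternion.imI_mul, Quaternion.imJ_mul, Quaternion.imK_mul,
    Quaternion.re_neg, Quaternion.imI_neg, Quaternion.imJ_neg, Quaternion.imK_neg,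
    Quaternion.re_one, Quaternion.imI_one, Quaternion.imJ_one, Quaternion.imK_one] at h1 h2 h3 h4
  by_contra hre
  have hI : I.imI = 0 := by
    rcases mul_eq_zero.mp (show I.re * I.imI = 0 by linarith) with h' | h'
    · exact absurd h' hre
    · exact h'
  have hJ : I.imJ = 0 := by
    rcases mul_eq_zero.mp (show I.re * I.imJ = 0 by linarith) with h' | h'
    · exact absurd h' hre
    · exact h'
  have hK : I.imK = 0 := by
    rcases mul_eq_zero.mp (show I.re * I.imK = 0 by linarith) with h' | h'
    · exact absurd h' hre
    · exact h'
  rw [hI, hJ, hK] at h1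
  nlinarith

lemma aux_im_of_line {q : ℍ} {I : ℍ} (hI : I^2 = -1) {a b : ℝ} (h : q = (a : ℍ) + b • I) :
    q.im = b • I := by
  have hre := aux_unit_re hI
  have : I.im = I := by
    conv_rhs => rw [← I.re_add_im]
    rw [hre]; simp
  rw [h]
  simp [this]

/-- every quaternion lies on some complex line with itself -/
lemma aux_sameLine_self (q : ℍ) : SameLine q q := by
  by_cases h : q.im = 0
  · obtain ⟨I, h1, h2, h3, h4⟩ : ∃ I : ℍ, I.re = 0 ∧ I.imI = 1 ∧ I.imJ = 0 ∧ I.imK = 0 := ⟨⟨0,1,0,0⟩, rfl, rfl, rfl, rfl⟩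
    refine ⟨I, ?_, ⟨q.re, 0, ?_⟩, ⟨q.re, 0, ?_⟩⟩
    · ext <;> simp [sq, Quaternion.re_mul, Quaternion.imI_mul, Quaternion.imJ_mul, Quaternion.imK_mul, h1, h2, h3, h4, Quaternion.re_one, Quaternion.imI_one, Quaternion.imJ_one, Quaternion.imK_one]
    all_goals
      simp only [zero_smul, add_zero]
      conv_lhs => rw [← q.re_add_im, h]
      simp
  · refine ⟨‖q.im‖⁻¹ • q.im, ?_, ⟨q.re, ‖q.im‖, ?_⟩, ⟨q.re, ‖q.im‖, ?_⟩⟩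
    · have hn : ‖q.im‖ ≠ 0 := norm_ne_zero_iff.mpr h
      have : (‖q.im‖⁻¹ • q.im)^2 = (‖q.im‖⁻¹)^2 • (q.im^2) := by
        rw [smul_pow]
      rw [this, Quaternion.im_sq]
      have hns : Quaternion.normSq q.im = ‖q.im‖ * ‖q.im‖ := Quaternion.normSq_eq_norm_mul_self _
      rw [hns, smul_neg, Quaternion.smul_coe]
      have h5 : ‖q.im‖⁻¹ ^ 2 * (‖q.im‖ * ‖q.im‖) = 1 := by
        field_simp
      rw [h5]
      simp
    all_goals
      rw [smul_smul]
      have hn : ‖q.im‖ ≠ 0 := norm_ne_zero_iff.mpr h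
      rw [mul_inv_cancel₀ hn, one_smul, q.re_add_im]

lemma aux_sameLine_symm {q p : ℍ} (h : SameLine q p) : SameLine p q := by
  obtain ⟨I, hI, h1, h2⟩ := h
  exact ⟨I, hI, h2, h1⟩

/-- if o shares a line with both q and p, and o has nonzero imaginary part, then q and p share a line -/
lemma aux_middle {q o p : ℍ} (h1 : SameLine q o) (h2 : SameLine o p) (ho : o.im ≠ 0) :
    SameLine q p := by
  obtain ⟨I, hI, ⟨a1, b1, hq⟩, ⟨a2, b2, ho1⟩⟩ := h1
  obtain ⟨J, hJ, ⟨a3, b3, ho2⟩, ⟨a4, b4, hp⟩⟩ := h2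
  have e1 : o.im = b2 • I := aux_im_of_line hI ho1
  have e2 : o.im = b3 • J := aux_im_of_line hJ ho2
  have hb2 : b2 ≠ 0 := by rintro rfl; simp at e1; exact ho e1
  have : I = (b2⁻¹ * b3) • J := by
    rw [mul_smul, ← e2, e1, smul_smul, inv_mul_cancel₀ hb2, one_smul]
  refine ⟨J, hJ, ⟨a1, b1 * (b2⁻¹ * b3), ?_⟩, ⟨a4, b4, hp⟩⟩
  rw [hq, this, smul_smul]

lemma aux_omega_eq_norm_of_real {o p : ℍ} (h : o.im = 0) : omegaDist o p = ‖o - p‖ := by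
  rw [omegaDist, aux_norm_sub, h]
  simp

theorem sigma_is_metric :
    (∀ q p : ℍ, 0 ≤ sigmaDist q p) ∧
    (∀ q p : ℍ, sigmaDist q p = 0 ↔ q = p) ∧
    (∀ q p : ℍ, sigmaDist q p = sigmaDist p q) ∧
    (∀ q o p : ℍ, sigmaDist q p ≤ sigmaDist q o + sigmaDist o p) := by
  have nonneg : ∀ q p : ℍ, 0 ≤ sigmaDist q p := by
    intro q p
    rw [sigmaDist]; split
    · exact norm_nonneg _
    · exact aux_omega_nonneg q p
  refine ⟨nonneg, ?_, ?_, ?_⟩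
  · intro q p
    constructor
    · intro h
      have h1 := aux_norm_le_sigma q p
      rw [h] at h1
      have : ‖q - p‖ = 0 := le_antisymm h1 (norm_nonneg _)
      rwa [norm_sub_eq_zero_iff] at this
    · rintro rfl
      rw [sigmaDist, if_pos (aux_sameLine_self q), sub_self, norm_zero]
  · intro q p
    rw [sigmaDist, sigmaDist]
    by_cases h : SameLine q p
    · rw [if_pos h, if_pos (aux_sameLine_symm h), norm_sub_rev]
    · rw [if_neg h, if_neg (fun h' => h (aux_sameLine_symm h')), aux_omega_symm]
  · intro q o p
    by_cases hqp : SameLine q p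
    · rw [sigmaDist, if_pos hqp]
      calc ‖q - p‖ ≤ ‖q - o‖ + ‖o - p‖ := by
            simpa using norm_sub_le_norm_sub_add_norm_sub q o p
        _ ≤ sigmaDist q o + sigmaDist o p :=
            add_le_add (aux_norm_le_sigma q o) (aux_norm_le_sigma o p)
    · rw [sigmaDist, if_neg hqp]
      by_cases h2 : SameLine o p
      · -- then either o.im = 0, or ¬SameLine q o
        by_cases h1 : SameLine q o
        · have ho : o.im = 0 := by
            by_contra ho
            exact hqp (aux_middle h1 h2 ho)
          calc omegaDist q p ≤ auxD q o + omegaDist o p := aux_omega_tri q o p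
            _ = auxD q o + ‖o - p‖ := by rw [aux_omega_eq_norm_of_real ho]
            _ ≤ sigmaDist q o + sigmaDist o p :=
                add_le_add (aux_D_le_sigma q o) (aux_norm_le_sigma o p)
        · -- ¬SameLine q o : use symmetric triangle
          have htri : omegaDist q p ≤ auxD o p + omegaDist q o := by
            rw [aux_omega_symm q p, aux_D_symm o p, aux_omega_symm q o]
            exact aux_omega_tri p o q
          have h3 : omegaDist q o = sigmaDist q o := by rw [sigmaDist, if_neg h1]
          have h4 := aux_D_le_sigma o p
          linarith
      · calc omegaDist q p ≤ auxD q o + omegaDist o p := aux_omega_tri q o p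
          _ = auxD q o + sigmaDist o p := by rw [sigmaDist, if_neg h2]
          _ ≤ sigmaDist q o + sigmaDist o p := add_le_add (aux_D_le_sigma q o) le_rfl
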